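/- Let λ be a real number with λ ∉ σ(−γA). If λ is an eigenvalue of H, then det(M^λ) = 0; moreover, for every nonzero vector v with Hv = λv, the vector (v_w)_{w∈W} ∈ ℝ^W is a nonzero element of the kernel of M^λ. -/

import Mathlib

open Matrix

variable {V : Type*} [Fintype V] [DecidableEq V]

/-- The search Hamiltonian `H = -γ•A - ∑_{w ∈ W} e_w e_wᵀ`. -/
noncomputable def searchH (A : Matrix V V ℝ) (W : Finset V) (γ : ℝ) : Matrix V V ℝ :=
  (-γ) • A - ∑ w ∈ W, Matrix.vecMulVec (Pi.single w 1) (Pi.single w 1)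

/-- `μ` is a (real) eigenvalue of the matrix `M`. -/
def IsEig (M : Matrix V V ℝ) (μ : ℝ) : Prop :=
  ∃ x, x ≠ 0 ∧ M.mulVec x = μ • x

/-- `φ, P` form the spectral decomposition of the symmetric matrix `A`:
`φ 0 > φ 1 > ⋯ > φ k` are the distinct eigenvalues of `A`, and `P ℓ` is the
orthogonal projection onto the `φ ℓ`-eigenspace. -/
def SpectralDecomp (A : Matrix V V ℝ) (k : ℕ) (φ : Fin (k+1) → ℝ)
    (P : Fin (k+1) → Matrix V V ℝ) : Prop :=
  StrictAnti φ ∧ (∀ ℓ, (P ℓ)ᵀ = P ℓ) ∧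
    (∀ ℓ ℓ', P ℓ * P ℓ' = if ℓ = ℓ' then P ℓ else 0) ∧
    (∑ ℓ, P ℓ = 1) ∧ (A = ∑ ℓ, φ ℓ • P ℓ) ∧ (∀ ℓ, P ℓ ≠ 0)

/-- The matrix `M^λ`, indexed by the marked vertices, with entries
`M^λ_{w w'} = δ_{w w'} + ∑_ℓ (e_wᵀ P_ℓ e_{w'})/(λ + γ φ_ℓ)`. -/
noncomputable def Mmat {k : ℕ} (φ : Fin (k+1) → ℝ) (P : Fin (k+1) → Matrix V V ℝ)
    (W : Finset V) (γ lam : ℝ) : Matrix W W ℝ :=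
  Matrix.of fun w w' : W =>
    (if (w : V) = (w' : V) then (1 : ℝ) else 0) +
      ∑ ℓ, P ℓ (w : V) (w' : V) / (lam + γ * φ ℓ)

theorem stmt1 (G : SimpleGraph V) [DecidableRel G.Adj] (hG : G.Connected)
    (W : Finset V) (hW : W.Nonempty) (γ : ℝ) (hγ : 0 < γ)
    (k : ℕ) (φ : Fin (k+1) → ℝ) (P : Fin (k+1) → Matrix V V ℝ)
    (hspec : SpectralDecomp (G.adjMatrix ℝ) k φ P)
    (lam : ℝ) (hnot : ¬ IsEig ((-γ) • G.adjMatrix ℝ) lam)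
    (hlam : IsEig (searchH (G.adjMatrix ℝ) W γ) lam) :
    (Mmat φ P W γ lam).det = 0 ∧
      ∀ v : V → ℝ, v ≠ 0 → (searchH (G.adjMatrix ℝ) W γ).mulVec v = lam • v →
        (fun w : W => v (w : V)) ≠ 0 ∧
          (Mmat φ P W γ lam).mulVec (fun w : W => v (w : V)) = 0 := by
  obtain ⟨hanti, hsymm, horth, hsum, hA, hPne⟩ := hspec
  set A := G.adjMatrix ℝ with hAdef
  -- denominators are nonzero
  have hden : ∀ ℓ, lam + γ * φ ℓ ≠ 0 := by
    intro ℓ h0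
    apply hnot
    obtain ⟨x, hx⟩ : ∃ x, (P ℓ).mulVec x ≠ 0 := by
      by_contra h
      push_neg at h
      apply hPne ℓ
      ext i j
      have := congrFun (h (Pi.single j 1)) i
      simpa using this
    have hAP : A * P ℓ = φ ℓ • P ℓ := by
      rw [hA, Finset.sum_mul]
      simp only [smul_mul_assoc, horth, smul_ite, smul_zero]
      simp
    refine ⟨(P ℓ).mulVec x, hx, ?_⟩
    have hlamv : lam = -γ * φ ℓ := by linarith
    rw [hlamv, Matrix.smul_mulVec, Matrix.mulVec_mulVec, hAP,
      Matrix.smul_mulVec, smul_smul]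
  set c : Fin (k+1) → ℝ := fun ℓ => lam + γ * φ ℓ with hc
  set R : Matrix V V ℝ := ∑ ℓ, (c ℓ)⁻¹ • P ℓ with hRdef
  have hLA : lam • (1 : Matrix V V ℝ) + γ • A = ∑ ℓ, c ℓ • P ℓ := by
    rw [hA, ← hsum, Finset.smul_sum, Finset.smul_sum, ← Finset.sum_add_distrib]
    exact Finset.sum_congr rfl fun ℓ _ => by rw [smul_smul, ← add_smul]
  have hRinv : R * (lam • (1 : Matrix V V ℝ) + γ • A) = 1 := by
    rw [hLA, hRdef, Finset.sum_mul]
    have key : ∀ ℓ, ((c ℓ)⁻¹ • P ℓ) * ∑ m, c m • P m = P ℓ := by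
      intro ℓ
      rw [Finset.mul_sum]
      have h1 : ∀ m, ((c ℓ)⁻¹ • P ℓ) * (c m • P m) = if ℓ = m then P ℓ else 0 := by
        intro m
        rw [smul_mul_assoc, mul_smul_comm, horth, smul_smul]
        split
        · next h => rw [h, inv_mul_cancel₀ (hden m), one_smul]
        · simp
      simp only [h1]
      simp
    simp only [key]
    exact hsum
  -- main pointwise key
  have main : ∀ v : V → ℝ, v ≠ 0 → (searchH A W γ).mulVec v = lam • v →
      (fun w : W => v (w : V)) ≠ 0 ∧
        (Mmat φ P W γ lam).mulVec (fun w : W => v (w : V)) = 0 := by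
    intro v hv0 hvev
    set S : Matrix V V ℝ := ∑ w ∈ W, Matrix.vecMulVec (Pi.single w 1) (Pi.single w 1) with hSdef
    have h1 : ((-γ) • A).mulVec v - S.mulVec v = lam • v := by
      rw [← Matrix.sub_mulVec]
      exact hvev
    have hv2 : (lam • (1 : Matrix V V ℝ) + γ • A).mulVec v = -(S.mulVec v) := by
      rw [Matrix.smul_mulVec] at h1
      rw [Matrix.add_mulVec, Matrix.smul_mulVec, Matrix.smul_mulVec,
        Matrix.one_mulVec, ← h1]
      module
    have hvR : v = -(R.mulVec (S.mulVec v)) := by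
      calc v = ((1 : Matrix V V ℝ)).mulVec v := by rw [Matrix.one_mulVec]
        _ = (R * (lam • (1 : Matrix V V ℝ) + γ • A)).mulVec v := by rw [hRinv]
        _ = R.mulVec ((lam • (1 : Matrix V V ℝ) + γ • A).mulVec v) := by
              rw [Matrix.mulVec_mulVec]
        _ = -(R.mulVec (S.mulVec v)) := by rw [hv2, Matrix.mulVec_neg]
    have hSv : S.mulVec v = ∑ w ∈ W, v w • (Pi.single w 1 : V → ℝ) := by
      ext j
      simp only [hSdef, Matrix.mulVec, dotProduct, Matrix.sum_apply,
        Matrix.vecMulVec_apply, Finset.sum_mul, Finset.sum_apply, Pi.smul_apply, smul_eq_mul]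
      rw [Finset.sum_comm]
      refine Finset.sum_congr rfl fun w hw => ?_
      simp [Pi.single_apply, mul_ite, ite_mul, mul_comm]
    have hveq : ∀ w ∈ W, v w + ∑ w' ∈ W, R w w' * v w' = 0 := by
      intro w hw
      have hc1 : v w = -(R.mulVec (S.mulVec v) w) := by simpa using congrFun hvR w
      have hRS : R.mulVec (S.mulVec v) w = ∑ w' ∈ W, R w w' * v w' := by
        rw [hSv, ← Matrix.mulVecLin_apply, map_sum]
        simp only [_root_.map_smul, Matrix.mulVecLin_apply, Matrix.mulVec_single, mul_one,
          Finset.sum_apply, Pi.smul_apply, smul_eq_mul]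
        exact Finset.sum_congr rfl fun w' _ => by simp [mul_comm]
      rw [hRS] at hc1
      rw [hc1]
      ring
    have hRentry : ∀ (w w' : V), R w w' = ∑ ℓ, P ℓ w w' / c ℓ := by
      intro w w'
      rw [hRdef]
      simp only [Matrix.sum_apply, Matrix.smul_apply, smul_eq_mul]
      exact Finset.sum_congr rfl fun ℓ _ => (div_eq_inv_mul _ _).symm
    constructor
    · intro hu
      apply hv0
      have hSv0 : S.mulVec v = 0 := by
        rw [hSv]
        refine Finset.sum_eq_zero fun w hw => ?_
        have : v w = 0 := congrFun hu ⟨w, hw⟩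
        rw [this, zero_smul]
      rw [hvR, hSv0, Matrix.mulVec_zero, neg_zero]
    · funext w
      show ∑ w' : W, Mmat φ P W γ lam w w' * v (w' : V) = 0
      have hsplit : ∀ w' : W, Mmat φ P W γ lam w w' * v (w' : V) =
          (if (w : V) = (w' : V) then v (w' : V) else 0) + R (w : V) (w' : V) * v (w' : V) := by
        intro w'
        simp only [Mmat, Matrix.of_apply, add_mul, hRentry]
        congr 1
        split <;> simp
      simp only [hsplit]
      rw [Finset.sum_add_distrib]
      have h1 : (∑ w' : W, if (w : V) = (w' : V) then v (w' : V) else 0) = v (w : V) := by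
        simp only [Subtype.coe_inj]
        rw [Finset.sum_ite_eq]
        simp
      have h2 : (∑ w' : W, R (w : V) (w' : V) * v (w' : V)) = ∑ w' ∈ W, R (w : V) w' * v w' :=
        Finset.sum_coe_sort W (fun w' => R (w : V) w' * v w')
      rw [h1, h2]
      exact hveq w w.2
  refine ⟨?_, main⟩
  obtain ⟨x, hx0, hxev⟩ := hlam
  obtain ⟨hu0, huk⟩ := main x hx0 hxev
  exact Matrix.exists_mulVec_eq_zero_iff.mp ⟨_, hu0, huk⟩
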